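/- Let (L, Δ, S) be a locality and H a subgroup of L. Then there exists P ∈ Δ such that H ≤ N_L(P); that is, every subgroup of a locality is contained in the normalizer of some object. -/

import Mathlib

universe u

structure PartialGroupOn (L : Type u) : Type u where
  nonempty : Nonempty L
  D : Set (List L)
  Pi : List L → L
  inv : L → L
  mem_single : ∀ x : L, [x] ∈ D
  mem_append_left : ∀ u v : List L, u ++ v ∈ D → u ∈ D
  mem_append_right : ∀ u v : List L, u ++ v ∈ D → v ∈ D
  Pi_single : ∀ x : L, Pi [x] = x
  mem_assoc : ∀ u v w : List L, u ++ v ++ w ∈ D → u ++ [Pi v] ++ w ∈ D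
  Pi_assoc : ∀ u v w : List L, u ++ v ++ w ∈ D →
    Pi (u ++ v ++ w) = Pi (u ++ [Pi v] ++ w)
  inv_inv : ∀ x : L, inv (inv x) = x
  mem_inv : ∀ w ∈ D, (w.reverse.map inv) ++ w ∈ D
  Pi_inv : ∀ w ∈ D, Pi ((w.reverse.map inv) ++ w) = Pi []

namespace PartialGroupOn

variable {L : Type u} (M : PartialGroupOn L)

/-- The inverse of a word: reverse the word and invert each entry. -/
def wordInv (w : List L) : List L := w.reverse.map M.inv

/-- The identity element `1 = Π(∅)`. -/
def one : L := M.Pi []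

/-- Conjugation `x ↦ x^g = Π(g⁻¹, x, g)`. -/
def conj (x g : L) : L := M.Pi [M.inv g, x, g]

/-- `D(g)` is the set of `x` for which `x^g` is defined. -/
def Dg (g : L) : Set L := {x | [M.inv g, x, g] ∈ M.D}

/-- A partial subgroup: a nonempty subset closed under inversion and under the
product applied to words in `D` with entries in the subset. -/
def IsPartialSubgroup (H : Set L) : Prop :=
  H.Nonempty ∧ (∀ x ∈ H, M.inv x ∈ H) ∧
    ∀ w : List L, (∀ x ∈ w, x ∈ H) → w ∈ M.D → M.Pi w ∈ H

/-- A partial normal subgroup of `L`. -/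
def IsPartialNormal (N : Set L) : Prop :=
  M.IsPartialSubgroup N ∧
    ∀ x ∈ N, ∀ g : L, [M.inv g, x, g] ∈ M.D → M.conj x g ∈ N

/-- A subgroup of `L`: a partial subgroup `H` with `W(H) ⊆ D`. -/
def IsSubgroup (H : Set L) : Prop :=
  M.IsPartialSubgroup H ∧ ∀ w : List L, (∀ x ∈ w, x ∈ H) → w ∈ M.D

/-- `X ⊆ D(g)`, i.e. `X^g` is defined. -/
def setConjDef (X : Set L) (g : L) : Prop := ∀ x ∈ X, [M.inv g, x, g] ∈ M.D

/-- The conjugate set `X^g`. -/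
def setConj (X : Set L) (g : L) : Set L := {y | ∃ x ∈ X, y = M.conj x g}

/-- `viaChain Δ w X` says that `w = (g₁,…,gₙ)` is in `D` via the chain
`X = X₀, X₁ = X₀^{g₁}, …` of members of `Δ`. -/
def viaChain (Δ : Set (Set L)) : List L → Set L → Prop
  | [], X => X ∈ Δ
  | g :: w, X => X ∈ Δ ∧ M.setConjDef X g ∧ viaChain Δ w (M.setConj X g)

/-- `(L, Δ)` is an objective partial group: every member of `Δ` is a subgroup,
(O1) `D = D_Δ`, and (O2) the overgroup-closure condition. -/
def Objective (Δ : Set (Set L)) : Prop :=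
  (∀ X ∈ Δ, M.IsSubgroup X) ∧
  (M.D = {w | ∃ X : Set L, M.viaChain Δ w X}) ∧
  (∀ X ∈ Δ, ∀ Y ∈ Δ, ∀ g : L, M.setConjDef X g → M.IsSubgroup (M.setConj X g) →
    M.setConj X g ⊆ Y →
    ∀ Z : Set L, M.IsSubgroup Z → M.setConj X g ⊆ Z → Z ⊆ Y → Z ∈ Δ)

/-- The normalizer `N_L(X) = {g : X^g = X}`. -/
def normalizer (X : Set L) : Set L := {g | M.setConjDef X g ∧ M.setConj X g = X}

/-- `S_g = {x ∈ D(g) ∩ S : x^g ∈ S}`. -/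
def Sg (S : Set L) (g : L) : Set L :=
  {x | x ∈ S ∧ [M.inv g, x, g] ∈ M.D ∧ M.conj x g ∈ S}

/-- `S_w`: the set of `x ∈ S` successively conjugated into `S` by the entries
of the word `w`. -/
def Sw (S : Set L) : List L → Set L
  | [] => S
  | g :: w => {x | x ∈ S ∧ [M.inv g, x, g] ∈ M.D ∧ M.conj x g ∈ Sw S w}

/-- A `p`-subgroup: a subgroup whose cardinality is a power of `p`. -/
def IsPSubgroup (p : ℕ) (H : Set L) : Prop :=
  M.IsSubgroup H ∧ ∃ n : ℕ, Nat.card H = p ^ n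

/-- `(L, Δ, S)` is a locality. -/
def IsLocality (p : ℕ) (Δ : Set (Set L)) (S : Set L) : Prop :=
  p.Prime ∧ Finite L ∧ S ∈ Δ ∧ (∀ X ∈ Δ, X ⊆ S) ∧ M.Objective Δ ∧
    M.IsPSubgroup p S ∧
    ∀ H : Set L, M.IsPSubgroup p H → S ⊆ H → H = S

/-- The product set `XY` of two subsets of `L`. -/
def setProd (X Y : Set L) : Set L :=
  {z | ∃ a ∈ X, ∃ b ∈ Y, [a, b] ∈ M.D ∧ z = M.Pi [a, b]}

/-- A homomorphism of partial groups. -/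
def IsHom {L' : Type u} (M' : PartialGroupOn L') (β : L → L') : Prop :=
  (∀ w ∈ M.D, w.map β ∈ M'.D) ∧ ∀ w ∈ M.D, β (M.Pi w) = M'.Pi (w.map β)

end PartialGroupOn

open PartialGroupOn

variable {L : Type u}
namespace PartialGroupOn

variable {L : Type u} (M : PartialGroupOn L)

lemma mem_nil : ([] : List L) ∈ M.D := by
  obtain ⟨x⟩ := M.nonempty
  exact M.mem_append_left [] [x] (M.mem_single x)

lemma pi_nil : M.Pi [] = M.one := rfl

lemma contract {u v : List L} (h : u ++ v ∈ M.D) :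
    [M.Pi u, M.Pi v] ∈ M.D ∧ M.Pi (u ++ v) = M.Pi [M.Pi u, M.Pi v] := by
  have h0 : [] ++ u ++ v ∈ M.D := by simpa using h
  have h1 : [M.Pi u] ++ v ∈ M.D := by simpa using M.mem_assoc [] u v h0
  have e1 : M.Pi (u ++ v) = M.Pi ([M.Pi u] ++ v) := by
    simpa using M.Pi_assoc [] u v h0
  have h1' : [M.Pi u] ++ v ++ [] ∈ M.D := by simpa using h1
  have h2 : [M.Pi u, M.Pi v] ∈ M.D := by
    simpa using M.mem_assoc [M.Pi u] v [] h1'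
  have e2 : M.Pi ([M.Pi u] ++ v) = M.Pi [M.Pi u, M.Pi v] := by
    have := M.Pi_assoc [M.Pi u] v [] h1'
    simpa using this
  exact ⟨h2, by rw [e1, e2]⟩

lemma cons_contract {x : L} {u : List L} (h : x :: u ∈ M.D) :
    [x, M.Pi u] ∈ M.D ∧ M.Pi (x :: u) = M.Pi [x, M.Pi u] := by
  have := M.contract (u := [x]) (v := u) (by simpa using h)
  simpa [M.Pi_single] using this

lemma pi_one_right {a : L} (h : [a] ∈ M.D) :
    [a, M.one] ∈ M.D ∧ M.Pi [a, M.one] = a := by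
  have h0 : [a] ++ [] ++ [] ∈ M.D := by simpa using h
  refine ⟨by simpa [one] using M.mem_assoc [a] [] [] h0, ?_⟩
  have := M.Pi_assoc [a] [] [] h0
  simp only [List.append_nil] at this
  rw [show [a] ++ [M.Pi []] = [a, M.one] from rfl] at this
  rw [← this, M.Pi_single]

lemma pi_one_left {a : L} (h : [a] ∈ M.D) :
    [M.one, a] ∈ M.D ∧ M.Pi [M.one, a] = a := by
  have h0 : [] ++ [] ++ [a] ∈ M.D := by simpa using h
  refine ⟨by simpa [one] using M.mem_assoc [] [] [a] h0, ?_⟩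
  have := M.Pi_assoc [] [] [a] h0
  simp only [List.nil_append] at this
  rw [show [M.Pi []] ++ [a] = [M.one, a] from rfl] at this
  rw [← this, M.Pi_single]

lemma wordInv_wordInv (u : List L) : M.wordInv (M.wordInv u) = u := by
  have hid : M.inv ∘ M.inv = id := funext M.inv_inv
  simp [wordInv, List.map_reverse, List.map_map, hid]

lemma winv_append_self {w : List L} (h : w ∈ M.D) : M.wordInv w ++ w ∈ M.D :=
  M.mem_inv w h

lemma winv_mem {w : List L} (h : w ∈ M.D) : M.wordInv w ∈ M.D :=
  M.mem_append_left _ _ (M.winv_append_self h)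

lemma append_winv_self {w : List L} (h : w ∈ M.D) : w ++ M.wordInv w ∈ M.D := by
  have := M.winv_append_self (M.winv_mem h)
  rwa [M.wordInv_wordInv] at this

lemma pi_winv_append {w : List L} (h : w ∈ M.D) :
    M.Pi (M.wordInv w ++ w) = M.one :=
  M.Pi_inv w h

lemma pair_inv_left (a : L) :
    [M.inv a, a] ∈ M.D ∧ M.Pi [M.inv a, a] = M.one := by
  have h := M.mem_single a
  exact ⟨M.winv_append_self h, M.pi_winv_append h⟩

lemma pair_inv_right (a : L) :
    [a, M.inv a] ∈ M.D ∧ M.Pi [a, M.inv a] = M.one := by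
  have := M.pair_inv_left (M.inv a)
  rwa [M.inv_inv] at this

lemma eq_inv_of_pi_pair {a b : L} (h : [a, b] ∈ M.D)
    (e : M.Pi [a, b] = M.one) : b = M.inv a ∧ a = M.inv b := by
  have h1 : M.wordInv [a, b] ++ [a, b] ∈ M.D := M.winv_append_self h
  have h1' : [M.inv b, M.inv a, a, b] ∈ M.D := h1
  have h2 : [M.inv a, a, b] ∈ M.D := M.mem_append_right [M.inv b] _ h1'
  -- compute Pi [inv a, a, b] two ways
  have c1 := M.cons_contract (x := M.inv a) (u := [a, b]) h2
  have e1 : M.Pi [M.inv a, a, b] = M.inv a := by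
    rw [c1.2, e, (M.pi_one_right (M.mem_single (M.inv a))).2]
  have h0 : [] ++ [M.inv a, a] ++ [b] ∈ M.D := by simpa using h2
  have e2 : M.Pi [M.inv a, a, b] = b := by
    have := M.Pi_assoc [] [M.inv a, a] [b] h0
    simp only [List.nil_append, List.cons_append] at this
    rw [(M.pair_inv_left a).2] at this
    rw [this, (M.pi_one_left (M.mem_single b)).2]
  have hb : b = M.inv a := by rw [← e2, e1]
  exact ⟨hb, by rw [hb, M.inv_inv]⟩

lemma inv_pi {w : List L} (h : w ∈ M.D) :
    M.inv (M.Pi w) = M.Pi (M.wordInv w) := by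
  have h1 := M.winv_append_self h
  have c := M.contract h1
  have e : M.Pi [M.Pi (M.wordInv w), M.Pi w] = M.one := by
    rw [← c.2, M.pi_winv_append h]
  have := M.eq_inv_of_pi_pair c.1 e
  exact (this.2).symm

lemma inv_one : M.inv M.one = M.one := by
  have := M.inv_pi (w := []) M.mem_nil
  simpa [wordInv, one] using this

lemma mem_one_cons {x : L} (h : [x] ∈ M.D) : [M.one, x, M.one] ∈ M.D := by
  have h0 : [] ++ [] ++ [x] ∈ M.D := by simpa using h
  have h1 : [M.one, x] ∈ M.D := by simpa [one] using M.mem_assoc [] [] [x] h0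
  have h1' : [M.one, x] ++ [] ++ [] ∈ M.D := by simpa using h1
  simpa [one] using M.mem_assoc [M.one, x] [] [] h1'

lemma conj_one_right (x : L) : M.conj x M.one = x := by
  have h := M.mem_single x
  have h0 : [] ++ [] ++ [x] ∈ M.D := by simpa using h
  have h1 : [M.one, x] ∈ M.D := by simpa [one] using M.mem_assoc [] [] [x] h0
  have e1 : M.Pi [x] = M.Pi [M.one, x] := by
    simpa [one] using M.Pi_assoc [] [] [x] h0
  have h1' : [M.one, x] ++ [] ++ [] ∈ M.D := by simpa using h1
  have e2 : M.Pi [M.one, x] = M.Pi [M.one, x, M.one] := by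
    simpa [one] using M.Pi_assoc [M.one, x] [] [] h1'
  show M.Pi [M.inv M.one, x, M.one] = x
  rw [M.inv_one, ← e2, ← e1, M.Pi_single]

lemma conj_one_left (g : L) : M.conj M.one g = M.one := by
  have h := (M.pair_inv_left g).1
  have h0 : [M.inv g] ++ [] ++ [g] ∈ M.D := by simpa using h
  have e := M.Pi_assoc [M.inv g] [] [g] h0
  simp only [List.append_nil] at e
  show M.Pi [M.inv g, M.one, g] = M.one
  rw [show ([M.inv g] ++ [M.Pi []] ++ [g] : List L) = [M.inv g, M.one, g] from rfl] at e
  rw [← e]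
  exact (M.pair_inv_left g).2

lemma conj_rev {x g : L} (h : [M.inv g, x, g] ∈ M.D) :
    [g, M.conj x g, M.inv g] ∈ M.D ∧ M.conj (M.conj x g) (M.inv g) = x := by
  have h1 : [M.inv g, M.inv x, g, M.inv g, x, g] ∈ M.D := by
    have := M.winv_append_self h
    simpa [wordInv, M.inv_inv] using this
  have h2 : [g, M.inv g, x, g] ∈ M.D := M.mem_append_right [M.inv g, M.inv x] _ h1
  have h3 : [g, M.inv g, x, g, M.inv g, M.inv x, g, M.inv g] ∈ M.D := by
    have := M.append_winv_self h2
    simpa [wordInv, M.inv_inv] using this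
  have h4 : [g, M.inv g, x, g, M.inv g] ∈ M.D :=
    M.mem_append_left [g, M.inv g, x, g, M.inv g] [M.inv x, g, M.inv g] h3
  have h4' : [g] ++ [M.inv g, x, g] ++ [M.inv g] ∈ M.D := h4
  have h5 : [g, M.conj x g, M.inv g] ∈ M.D := M.mem_assoc [g] [M.inv g, x, g] [M.inv g] h4'
  have e1 : M.Pi [g, M.inv g, x, g, M.inv g] = M.Pi [g, M.conj x g, M.inv g] :=
    M.Pi_assoc [g] [M.inv g, x, g] [M.inv g] h4'
  have h4'' : [] ++ [g, M.inv g] ++ [x, g, M.inv g] ∈ M.D := h4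
  have e2 : M.Pi [g, M.inv g, x, g, M.inv g] = M.Pi [M.one, x, g, M.inv g] := by
    have := M.Pi_assoc [] [g, M.inv g] [x, g, M.inv g] h4''
    simp only [List.nil_append] at this
    rwa [(M.pair_inv_right g).2] at this
  have h6 : [x, g, M.inv g] ∈ M.D := M.mem_append_right [g, M.inv g] _ h4
  have e3 : M.Pi [x, g, M.inv g] = M.Pi [M.one, x, g, M.inv g] := by
    have h6' : [] ++ [] ++ [x, g, M.inv g] ∈ M.D := by simpa using h6
    simpa [one] using M.Pi_assoc [] [] [x, g, M.inv g] h6'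
  have e4 : M.Pi [x, g, M.inv g] = x := by
    have h6' : [x] ++ [g, M.inv g] ++ [] ∈ M.D := by simpa using h6
    have := M.Pi_assoc [x] [g, M.inv g] [] h6'
    simp only [List.append_nil, List.cons_append, List.nil_append, List.singleton_append] at this
    rw [this, (M.pair_inv_right g).2, (M.pi_one_right (M.mem_single x)).2]
  constructor
  · exact h5
  · show M.Pi [M.inv (M.inv g), M.conj x g, M.inv g] = x
    rw [M.inv_inv, ← e1, e2, ← e3, e4]

end PartialGroupOn
namespace PartialGroupOn

variable {L : Type u} (M : PartialGroupOn L)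

lemma inv_pi_pair {a b : L} (h : [a, b] ∈ M.D) :
    M.inv (M.Pi [a, b]) = M.Pi [M.inv b, M.inv a] := by
  have := M.inv_pi h
  simpa [wordInv] using this

lemma inv_conj {x s : L} (h : [M.inv s, x, s] ∈ M.D) :
    M.inv (M.conj x s) = M.conj (M.inv x) s := by
  have := M.inv_pi h
  simpa [wordInv, M.inv_inv, conj] using this

lemma setConj_one (X : Set L) : M.setConj X M.one = X := by
  ext z
  constructor
  · rintro ⟨x, hx, rfl⟩
    rwa [M.conj_one_right]
  · intro hz
    exact ⟨z, hz, (M.conj_one_right z).symm⟩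

/-- Iterated set conjugation. -/
def setIter : Set L → List L → Set L
  | X, [] => X
  | X, s :: u => setIter (M.setConj X s) u

/-- An edge in the conjugation graph on `Δ`. -/
def edge (Δ : Set (Set L)) (X Y : Set L) (g : L) : Prop :=
  X ∈ Δ ∧ Y ∈ Δ ∧ M.setConjDef X g ∧ M.setConj X g = Y

variable {S : Set L}

section Ssub

variable (hSsub : M.IsSubgroup S)
include hSsub

lemma memD_S {w : List L} (hw : ∀ x ∈ w, x ∈ S) : w ∈ M.D := hSsub.2 w hw

lemma one_mem_S : M.one ∈ S := hSsub.1.2.2 [] (by simp) M.mem_nil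

lemma inv_mem_S {x : L} (hx : x ∈ S) : M.inv x ∈ S := hSsub.1.2.1 x hx

lemma pi_mem_S {w : List L} (hw : ∀ x ∈ w, x ∈ S) : M.Pi w ∈ S :=
  hSsub.1.2.2 w hw (M.memD_S hSsub hw)

lemma conj_mem_S {x s : L} (hx : x ∈ S) (hs : s ∈ S) : M.conj x s ∈ S :=
  M.pi_mem_S hSsub (by
    intro z hz
    simp only [List.mem_cons, List.not_mem_nil, or_false] at hz
    rcases hz with rfl | rfl | rfl
    exacts [M.inv_mem_S hSsub hs, hx, hs])

lemma setConjDef_S {X : Set L} (hX : X ⊆ S) {s : L} (hs : s ∈ S) :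
    M.setConjDef X s := by
  intro x hx
  refine M.memD_S hSsub ?_
  intro z hz
  simp only [List.mem_cons, List.not_mem_nil, or_false] at hz
  rcases hz with rfl | rfl | rfl
  exacts [M.inv_mem_S hSsub hs, hX hx, hs]

lemma setConj_sub_S {X : Set L} (hX : X ⊆ S) {s : L} (hs : s ∈ S) :
    M.setConj X s ⊆ S := by
  rintro z ⟨x, hx, rfl⟩
  exact M.conj_mem_S hSsub (hX hx) hs

lemma conj_conj_S {x a b : L} (hx : x ∈ S) (ha : a ∈ S) (hb : b ∈ S) :
    M.conj (M.conj x a) b = M.conj x (M.Pi [a, b]) := by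
  have hmem : ∀ z ∈ [M.inv b, M.inv a, x, a, b], z ∈ S := by
    intro z hz
    simp only [List.mem_cons, List.not_mem_nil, or_false] at hz
    rcases hz with rfl | rfl | rfl | rfl | rfl
    exacts [M.inv_mem_S hSsub hb, M.inv_mem_S hSsub ha, hx, ha, hb]
  have hw : [M.inv b, M.inv a, x, a, b] ∈ M.D := M.memD_S hSsub hmem
  have hw1 : [M.inv b] ++ [M.inv a, x, a] ++ [b] ∈ M.D := hw
  have e1 : M.Pi [M.inv b, M.inv a, x, a, b] = M.Pi [M.inv b, M.conj x a, b] := by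
    have := M.Pi_assoc [M.inv b] [M.inv a, x, a] [b] hw1
    simpa [conj] using this
  have hw2 : [] ++ [M.inv b, M.inv a] ++ [x, a, b] ∈ M.D := hw
  have m1 : [M.Pi [M.inv b, M.inv a], x, a, b] ∈ M.D := by
    simpa using M.mem_assoc [] [M.inv b, M.inv a] [x, a, b] hw2
  have e2 : M.Pi [M.inv b, M.inv a, x, a, b] = M.Pi [M.Pi [M.inv b, M.inv a], x, a, b] := by
    simpa using M.Pi_assoc [] [M.inv b, M.inv a] [x, a, b] hw2
  have m1' : [M.Pi [M.inv b, M.inv a], x] ++ [a, b] ++ [] ∈ M.D := by simpa using m1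
  have e3 : M.Pi [M.Pi [M.inv b, M.inv a], x, a, b]
      = M.Pi [M.Pi [M.inv b, M.inv a], x, M.Pi [a, b]] := by
    simpa using M.Pi_assoc [M.Pi [M.inv b, M.inv a], x] [a, b] [] m1'
  have hab : [a, b] ∈ M.D := M.memD_S hSsub (by
    intro z hz
    simp only [List.mem_cons, List.not_mem_nil, or_false] at hz
    rcases hz with rfl | rfl
    exacts [ha, hb])
  have hq : M.Pi [M.inv b, M.inv a] = M.inv (M.Pi [a, b]) := (M.inv_pi_pair hab).symm
  show M.Pi [M.inv b, M.conj x a, b] = M.Pi [M.inv (M.Pi [a, b]), x, M.Pi [a, b]]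
  rw [← e1, e2, e3, hq]

lemma conj_mul_S {x y s : L} (hx : x ∈ S) (hy : y ∈ S) (hs : s ∈ S) :
    M.conj (M.Pi [x, y]) s = M.Pi [M.conj x s, M.conj y s] := by
  have hsi := M.inv_mem_S hSsub hs
  have h1 := M.one_mem_S hSsub
  have hw : [M.inv s, x, s, M.inv s, y, s] ∈ M.D := M.memD_S hSsub (by
    intro z hz
    simp only [List.mem_cons, List.not_mem_nil, or_false] at hz
    rcases hz with rfl | rfl | rfl | rfl | rfl | rfl
    exacts [hsi, hx, hs, hsi, hy, hs])
  have hw0 : [M.inv s, x, s] ++ [M.inv s, y, s] ∈ M.D := hw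
  have c := M.contract hw0
  have e1 : M.Pi [M.inv s, x, s, M.inv s, y, s] = M.Pi [M.conj x s, M.conj y s] := by
    have := c.2
    simpa [conj] using this
  have hw1 : [M.inv s, x] ++ [s, M.inv s] ++ [y, s] ∈ M.D := hw
  have e2 : M.Pi [M.inv s, x, s, M.inv s, y, s]
      = M.Pi [M.inv s, x, M.Pi [s, M.inv s], y, s] := by
    simpa using M.Pi_assoc [M.inv s, x] [s, M.inv s] [y, s] hw1
  have m2 : [M.inv s, x, M.one, y, s] ∈ M.D := M.memD_S hSsub (by
    intro z hz
    simp only [List.mem_cons, List.not_mem_nil, or_false] at hz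
    rcases hz with rfl | rfl | rfl | rfl | rfl
    exacts [hsi, hx, h1, hy, hs])
  have m2' : [M.inv s] ++ [x, M.one] ++ [y, s] ∈ M.D := m2
  have e3 : M.Pi [M.inv s, x, M.one, y, s] = M.Pi [M.inv s, M.Pi [x, M.one], y, s] := by
    simpa using M.Pi_assoc [M.inv s] [x, M.one] [y, s] m2'
  have m3 : [M.inv s, x, y, s] ∈ M.D := M.memD_S hSsub (by
    intro z hz
    simp only [List.mem_cons, List.not_mem_nil, or_false] at hz
    rcases hz with rfl | rfl | rfl | rfl
    exacts [hsi, hx, hy, hs])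
  have m3' : [M.inv s] ++ [x, y] ++ [s] ∈ M.D := m3
  have e4 : M.Pi [M.inv s, x, y, s] = M.Pi [M.inv s, M.Pi [x, y], s] := by
    simpa using M.Pi_assoc [M.inv s] [x, y] [s] m3'
  show M.Pi [M.inv s, M.Pi [x, y], s] = M.Pi [M.conj x s, M.conj y s]
  rw [(M.pair_inv_right s).2] at e2
  rw [(M.pi_one_right (M.mem_single x)).2] at e3
  rw [← e4, ← e3, ← e2, e1]

lemma conj_map_S {s : L} (hs : s ∈ S) :
    ∀ {u : List L}, (∀ x ∈ u, x ∈ S) →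
      M.Pi (u.map (fun x => M.conj x s)) = M.conj (M.Pi u) s := by
  intro u
  induction u with
  | nil =>
    intro _
    simp only [List.map_nil]
    rw [pi_nil, M.conj_one_left]
  | cons x u ih =>
    intro hu
    have hx : x ∈ S := hu x (by simp)
    have hu' : ∀ z ∈ u, z ∈ S := fun z hz => hu z (by simp [hz])
    have hpu : M.Pi u ∈ S := M.pi_mem_S hSsub hu'
    have hcx : M.conj x s ∈ S := M.conj_mem_S hSsub hx hs
    have hmap : ∀ z ∈ u.map (fun x => M.conj x s), z ∈ S := by
      intro z hz
      simp only [List.mem_map] at hz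
      obtain ⟨a, ha, rfl⟩ := hz
      exact M.conj_mem_S hSsub (hu' a ha) hs
    have h1 : (M.conj x s :: u.map (fun x => M.conj x s)) ∈ M.D := M.memD_S hSsub (by
      intro z hz
      simp only [List.mem_cons] at hz
      rcases hz with rfl | hz
      exacts [hcx, hmap z hz])
    have c1 := M.cons_contract h1
    have h2 : (x :: u) ∈ M.D := M.memD_S hSsub (by
      intro z hz
      simp only [List.mem_cons] at hz
      rcases hz with rfl | hz
      exacts [hx, hu' z hz])
    have c2 := M.cons_contract h2
    simp only [List.map_cons]
    rw [c1.2, ih hu', c2.2, M.conj_mul_S hSsub hx hpu hs]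

omit hSsub in
lemma exists_preimage_word {X : Set L} {s : L} :
    ∀ {v : List L}, (∀ z ∈ v, z ∈ M.setConj X s) →
      ∃ u : List L, (∀ x ∈ u, x ∈ X) ∧ v = u.map (fun x => M.conj x s) := by
  intro v
  induction v with
  | nil => exact fun _ => ⟨[], by simp, by simp⟩
  | cons z v ih =>
    intro hv
    obtain ⟨x, hx, rfl⟩ := hv z (by simp)
    obtain ⟨u, hu, rfl⟩ := ih (fun w hw => hv w (by simp [hw]))
    exact ⟨x :: u, by
      intro a ha
      simp only [List.mem_cons] at ha
      rcases ha with rfl | ha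
      exacts [hx, hu a ha], by simp⟩

lemma setConj_isSubgroup {X : Set L} (hXsub : M.IsSubgroup X) (hXS : X ⊆ S)
    {s : L} (hs : s ∈ S) : M.IsSubgroup (M.setConj X s) := by
  constructor
  · refine ⟨⟨M.conj hXsub.1.1.choose s, hXsub.1.1.choose, hXsub.1.1.choose_spec, rfl⟩, ?_, ?_⟩
    · rintro y ⟨x, hx, rfl⟩
      rw [M.inv_conj (M.setConjDef_S hSsub hXS hs x hx)]
      exact ⟨M.inv x, hXsub.1.2.1 x hx, rfl⟩
    · intro w hw _
      obtain ⟨u, hu, rfl⟩ := M.exists_preimage_word hw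
      have hu' : ∀ x ∈ u, x ∈ S := fun x hx => hXS (hu x hx)
      rw [M.conj_map_S hSsub hs hu']
      exact ⟨M.Pi u, hXsub.1.2.2 u hu (M.memD_S hSsub hu'), rfl⟩
  · intro w hw
    exact M.memD_S hSsub (fun x hx => M.setConj_sub_S hSsub hXS hs (hw x hx))

lemma setConj_self {X : Set L} (hXsub : M.IsSubgroup X) (hXS : X ⊆ S)
    {x : L} (hx : x ∈ X) : M.setConj X x = X := by
  have hxS : x ∈ S := hXS hx
  ext z
  constructor
  · rintro ⟨y, hy, rfl⟩
    refine hXsub.1.2.2 [M.inv x, y, x] ?_ (M.setConjDef_S hSsub hXS hxS y hy)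
    intro a ha
    simp only [List.mem_cons, List.not_mem_nil, or_false] at ha
    rcases ha with rfl | rfl | rfl
    exacts [hXsub.1.2.1 x hx, hy, hx]
  · intro hz
    have hxi : M.inv x ∈ X := hXsub.1.2.1 x hx
    have hzi : M.conj z (M.inv x) ∈ X := by
      refine hXsub.1.2.2 [M.inv (M.inv x), z, M.inv x] ?_
        (M.setConjDef_S hSsub hXS (M.inv_mem_S hSsub hxS) z hz)
      intro a ha
      simp only [List.mem_cons, List.not_mem_nil, or_false] at ha
      rcases ha with rfl | rfl | rfl
      exacts [by rwa [M.inv_inv], hz, hxi]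
    have hd : [M.inv (M.inv x), z, M.inv x] ∈ M.D :=
      M.setConjDef_S hSsub hXS (M.inv_mem_S hSsub hxS) z hz
    have := (M.conj_rev hd).2
    rw [M.inv_inv] at this
    exact ⟨M.conj z (M.inv x), hzi, this.symm⟩

end Ssub

section Locality

variable {Δ : Set (Set L)}
variable (hobj : M.Objective Δ) (hSΔ : S ∈ Δ) (hΔS : ∀ X ∈ Δ, X ⊆ S)
include hobj hSΔ hΔS

lemma hSsub' : M.IsSubgroup S := hobj.1 S hSΔ

lemma mem_D_of_chain {w : List L} {X : Set L} (h : M.viaChain Δ w X) : w ∈ M.D := by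
  rw [hobj.2.1]
  exact ⟨X, h⟩

lemma setConj_mem_Δ {X : Set L} (hX : X ∈ Δ) {s : L} (hs : s ∈ S) :
    M.setConj X s ∈ Δ := by
  have hSsub := hobj.1 S hSΔ
  have hXS := hΔS X hX
  have hXsub := hobj.1 X hX
  have hZ := M.setConj_isSubgroup hSsub hXsub hXS hs
  exact hobj.2.2 X hX S hSΔ s (M.setConjDef_S hSsub hXS hs) hZ
    (M.setConj_sub_S hSsub hXS hs) (M.setConj X s) hZ (fun z hz => hz)
    (M.setConj_sub_S hSsub hXS hs)

lemma mem_Δ_of_between {X Z : Set L} (hX : X ∈ Δ) (hZ : M.IsSubgroup Z)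
    (hXZ : X ⊆ Z) (hZS : Z ⊆ S) : Z ∈ Δ := by
  have hSsub := hobj.1 S hSΔ
  have hXS := hΔS X hX
  have h1 : M.setConjDef X M.one := M.setConjDef_S hSsub hXS (M.one_mem_S hSsub)
  refine hobj.2.2 X hX S hSΔ M.one h1 ?_ ?_ Z hZ ?_ hZS
  · rw [M.setConj_one]
    exact hobj.1 X hX
  · rw [M.setConj_one]
    exact hXS
  · rw [M.setConj_one]
    exact hXZ

lemma edge_of_S {X : Set L} (hX : X ∈ Δ) {s : L} (hs : s ∈ S) :
    M.edge Δ X (M.setConj X s) s := by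
  have hSsub := hobj.1 S hSΔ
  exact ⟨hX, M.setConj_mem_Δ hobj hSΔ hΔS hX hs,
    M.setConjDef_S hSsub (hΔS X hX) hs, rfl⟩

end Locality

section Edges

variable {Δ : Set (Set L)}

lemma edge_rev {X Y : Set L} {g : L} (e : M.edge Δ X Y g) :
    M.edge Δ Y X (M.inv g) := by
  obtain ⟨hX, hY, hdef, heq⟩ := e
  refine ⟨hY, hX, ?_, ?_⟩
  · intro y hy
    rw [← heq] at hy
    obtain ⟨x, hx, rfl⟩ := hy
    have h := (M.conj_rev (hdef x hx)).1
    rwa [M.inv_inv]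
  · ext z
    constructor
    · rintro ⟨y, hy, rfl⟩
      rw [← heq] at hy
      obtain ⟨x, hx, rfl⟩ := hy
      rw [(M.conj_rev (hdef x hx)).2]
      exact hx
    · intro hz
      refine ⟨M.conj z g, heq ▸ ⟨z, hz, rfl⟩, ((M.conj_rev (hdef z hz)).2).symm⟩

end Edges

end PartialGroupOn
namespace PartialGroupOn

variable {L : Type u} (M : PartialGroupOn L)

lemma pi_inv_cancel_left {s h : L} (hsh : [s, h] ∈ M.D) :
    M.Pi [M.inv s, M.Pi [s, h]] = h := by
  have h1 : M.wordInv [s, h] ++ [s, h] ∈ M.D := M.winv_append_self hsh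
  have h1' : [M.inv h, M.inv s, s, h] ∈ M.D := h1
  have h2 : [M.inv s, s, h] ∈ M.D := M.mem_append_right [M.inv h] _ h1'
  have h2' : [M.inv s] ++ [s, h] ++ [] ∈ M.D := by simpa using h2
  have e1 : M.Pi [M.inv s, s, h] = M.Pi [M.inv s, M.Pi [s, h]] := by
    simpa using M.Pi_assoc [M.inv s] [s, h] [] h2'
  have h2'' : [] ++ [M.inv s, s] ++ [h] ∈ M.D := by simpa using h2
  have e2 : M.Pi [M.inv s, s, h] = M.Pi [M.Pi [M.inv s, s], h] := by
    simpa using M.Pi_assoc [] [M.inv s, s] [h] h2''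
  rw [← e1, e2, (M.pair_inv_left s).2, (M.pi_one_left (M.mem_single h)).2]

lemma conj_label {s h : L} (hw : [M.inv h, s, h] ∈ M.D) :
    M.Pi [h, M.conj s h] = M.Pi [s, h] := by
  have h1 : [M.inv h, M.inv s, h, M.inv h, s, h] ∈ M.D := by
    have := M.winv_append_self hw
    simpa [wordInv, M.inv_inv] using this
  have h2 : [h, M.inv h, s, h] ∈ M.D := M.mem_append_right [M.inv h, M.inv s] _ h1
  have h2' : [h] ++ [M.inv h, s, h] ++ [] ∈ M.D := by simpa using h2
  have e1 : M.Pi [h, M.inv h, s, h] = M.Pi [h, M.conj s h] := by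
    simpa [conj] using M.Pi_assoc [h] [M.inv h, s, h] [] h2'
  have h3 : [s, h] ∈ M.D := M.mem_append_right [h, M.inv h] _ h2
  have h2'' : [] ++ [h, M.inv h] ++ [s, h] ∈ M.D := h2
  have e2 : M.Pi [h, M.inv h, s, h] = M.Pi [M.Pi [h, M.inv h], s, h] := by
    simpa using M.Pi_assoc [] [h, M.inv h] [s, h] h2''
  have h3' : [] ++ [] ++ [s, h] ∈ M.D := h3
  have e3 : M.Pi [s, h] = M.Pi [M.one, s, h] := by
    simpa [one] using M.Pi_assoc [] [] [s, h] h3'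
  rw [← e1, e2, (M.pair_inv_right h).2, ← e3]

section Comp

variable {Δ : Set (Set L)} {S : Set L}
variable (hobj : M.Objective Δ) (hSΔ : S ∈ Δ) (hΔS : ∀ X ∈ Δ, X ⊆ S)
include hobj hSΔ hΔS

lemma edge_comp {X Y Z : Set L} {g g' : L}
    (e1 : M.edge Δ X Y g) (e2 : M.edge Δ Y Z g') :
    [g, g'] ∈ M.D ∧ M.edge Δ X Z (M.Pi [g, g']) := by
  have hSsub := hobj.1 S hSΔ
  have hXsub := hobj.1 X e1.1
  have hXS := hΔS X e1.1
  have er1 := M.edge_rev e1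
  have er2 := M.edge_rev e2
  have hchain : ∀ x ∈ X, M.viaChain Δ [M.inv g', M.inv g, x, g, g'] Z := by
    intro x hx
    refine ⟨e2.2.1, er2.2.2.1, ?_⟩
    rw [er2.2.2.2]
    refine ⟨e1.2.1, er1.2.2.1, ?_⟩
    rw [er1.2.2.2]
    refine ⟨e1.1, M.setConjDef_S hSsub hXS (hXS hx), ?_⟩
    rw [M.setConj_self hSsub hXsub hXS hx]
    refine ⟨e1.1, e1.2.2.1, ?_⟩
    rw [e1.2.2.2]
    refine ⟨e2.1, e2.2.2.1, ?_⟩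
    rw [e2.2.2.2]
    exact e2.2.1
  have hD : ∀ x ∈ X, [M.inv g', M.inv g, x, g, g'] ∈ M.D :=
    fun x hx => M.mem_D_of_chain hobj hSΔ hΔS (hchain x hx)
  obtain ⟨x₀, hx₀⟩ := hXsub.1.1
  have hgg' : [g, g'] ∈ M.D :=
    M.mem_append_right [M.inv g', M.inv g, x₀] [g, g'] (hD x₀ hx₀)
  have hq : M.Pi [M.inv g', M.inv g] = M.inv (M.Pi [g, g']) := (M.inv_pi_pair hgg').symm
  have key : ∀ x ∈ X, [M.inv (M.Pi [g, g']), x, M.Pi [g, g']] ∈ M.D ∧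
      M.conj x (M.Pi [g, g']) = M.conj (M.conj x g) g' := by
    intro x hx
    have hv := hD x hx
    have hv1 : [M.inv g'] ++ [M.inv g, x, g] ++ [g'] ∈ M.D := hv
    have eA : M.Pi [M.inv g', M.inv g, x, g, g'] = M.Pi [M.inv g', M.conj x g, g'] := by
      simpa [conj] using M.Pi_assoc [M.inv g'] [M.inv g, x, g] [g'] hv1
    have hv2 : [] ++ [M.inv g', M.inv g] ++ [x, g, g'] ∈ M.D := hv
    have m1 : [M.Pi [M.inv g', M.inv g], x, g, g'] ∈ M.D := by
      simpa using M.mem_assoc [] [M.inv g', M.inv g] [x, g, g'] hv2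
    have eB : M.Pi [M.inv g', M.inv g, x, g, g']
        = M.Pi [M.Pi [M.inv g', M.inv g], x, g, g'] := by
      simpa using M.Pi_assoc [] [M.inv g', M.inv g] [x, g, g'] hv2
    have m1' : [M.Pi [M.inv g', M.inv g], x] ++ [g, g'] ++ [] ∈ M.D := by simpa using m1
    have m2 : [M.Pi [M.inv g', M.inv g], x, M.Pi [g, g']] ∈ M.D := by
      simpa using M.mem_assoc [M.Pi [M.inv g', M.inv g], x] [g, g'] [] m1'
    have eC : M.Pi [M.Pi [M.inv g', M.inv g], x, g, g']
        = M.Pi [M.Pi [M.inv g', M.inv g], x, M.Pi [g, g']] := by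
      simpa using M.Pi_assoc [M.Pi [M.inv g', M.inv g], x] [g, g'] [] m1'
    rw [hq] at m2 eB eC
    refine ⟨m2, ?_⟩
    show M.Pi [M.inv (M.Pi [g, g']), x, M.Pi [g, g']] = M.Pi [M.inv g', M.conj x g, g']
    rw [← eC, ← eB, eA]
  refine ⟨hgg', e1.1, e2.2.1, fun x hx => (key x hx).1, ?_⟩
  ext z
  constructor
  · rintro ⟨x, hx, rfl⟩
    rw [(key x hx).2, ← e2.2.2.2]
    exact ⟨M.conj x g, e1.2.2.2 ▸ ⟨x, hx, rfl⟩, rfl⟩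
  · intro hz
    rw [← e2.2.2.2] at hz
    obtain ⟨y, hy, rfl⟩ := hz
    rw [← e1.2.2.2] at hy
    obtain ⟨x, hx, rfl⟩ := hy
    exact ⟨x, hx, ((key x hx).2).symm⟩

end Comp

end PartialGroupOn
namespace PartialGroupOn

variable {L : Type u} (M : PartialGroupOn L)

/-- Elements of `S` that conjugate into `S` under every element of `H`. -/
def goodElem (S H : Set L) (s : L) : Prop :=
  s ∈ S ∧ ∀ h ∈ H, [M.inv h, s, h] ∈ M.D ∧ M.conj s h ∈ S

/-- Members of `Δ` that conjugate into `Δ` under every element of `H`. -/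
def goodSet (Δ : Set (Set L)) (H : Set L) (X : Set L) : Prop :=
  X ∈ Δ ∧ ∀ h ∈ H, M.setConjDef X h ∧ M.setConj X h ∈ Δ

/-- The word `(h₁, h₁⁻¹, h₂, h₂⁻¹, …)`. -/
def pairWord : List L → List L
  | [] => []
  | h :: t => h :: M.inv h :: pairWord t

section HDev

variable {Δ : Set (Set L)} {S H : Set L}
variable (hobj : M.Objective Δ) (hSΔ : S ∈ Δ) (hΔS : ∀ X ∈ Δ, X ⊆ S)
  (hH : M.IsSubgroup H)

section Hbasic
include hH

lemma one_mem_H : M.one ∈ H := hH.1.2.2 [] (by simp) M.mem_nil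

lemma inv_mem_H {h : L} (hh : h ∈ H) : M.inv h ∈ H := hH.1.2.1 h hh

lemma mul_mem_H {h k : L} (hh : h ∈ H) (hk : k ∈ H) : M.Pi [h, k] ∈ H := by
  have hmem : ∀ x ∈ [h, k], x ∈ H := by
    intro x hx
    simp only [List.mem_cons, List.not_mem_nil, or_false] at hx
    rcases hx with rfl | rfl
    exacts [hh, hk]
  exact hH.1.2.2 [h, k] hmem (hH.2 [h, k] hmem)

end Hbasic

lemma goodSet_goodElem (hΔS : ∀ X ∈ Δ, X ⊆ S) {X : Set L}
    (gs : M.goodSet Δ H X) {x : L} (hx : x ∈ X) : M.goodElem S H x := by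
  refine ⟨hΔS X gs.1 hx, fun h hh => ⟨(gs.2 h hh).1 x hx, ?_⟩⟩
  exact hΔS _ (gs.2 h hh).2 ⟨x, hx, rfl⟩

lemma goodElem_inv {s : L} (hSsub : M.IsSubgroup S) (hs : M.goodElem S H s) :
    M.goodElem S H (M.inv s) := by
  refine ⟨M.inv_mem_S hSsub hs.1, fun h hh => ?_⟩
  obtain ⟨hd, hc⟩ := hs.2 h hh
  have h1 : [M.inv h, M.inv s, h, M.inv h, s, h] ∈ M.D := by
    have := M.winv_append_self hd
    simpa [wordInv, M.inv_inv] using this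
  have h2 : [M.inv h, M.inv s, h] ∈ M.D :=
    M.mem_append_left [M.inv h, M.inv s, h] [M.inv h, s, h] h1
  refine ⟨h2, ?_⟩
  rw [← M.inv_conj hd]
  exact M.inv_mem_S hSsub hc

lemma edge_H {X : Set L} (gs : M.goodSet Δ H X) {h : L} (hh : h ∈ H) :
    M.edge Δ X (M.setConj X h) h :=
  ⟨gs.1, (gs.2 h hh).2, (gs.2 h hh).1, rfl⟩

include hobj hSΔ hΔS hH

lemma edge_HH {X : Set L} (gs : M.goodSet Δ H X) {h k : L} (hh : h ∈ H)
    (hk : k ∈ H) : M.edge Δ (M.setConj X h) (M.setConj X (M.Pi [h, k])) k := by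
  have e_h := M.edge_H gs hh
  have er := M.edge_rev e_h
  have e_hk := M.edge_H gs (M.mul_mem_H hH hh hk)
  have c := M.edge_comp hobj hSΔ hΔS er e_hk
  have lab : M.Pi [M.inv h, M.Pi [h, k]] = k := by
    have hmem : ∀ x ∈ [h, k], x ∈ H := by
      intro x hx
      simp only [List.mem_cons, List.not_mem_nil, or_false] at hx
      rcases hx with rfl | rfl
      exacts [hh, hk]
    exact M.pi_inv_cancel_left (hH.2 [h, k] hmem)
  rw [lab] at c
  exact c.2

lemma goodSet_conj_H {X : Set L} (gs : M.goodSet Δ H X) {h : L} (hh : h ∈ H) :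
    M.goodSet Δ H (M.setConj X h) := by
  refine ⟨(gs.2 h hh).2, fun k hk => ?_⟩
  have e := M.edge_HH hobj hSΔ hΔS hH gs hh hk
  exact ⟨e.2.2.1, e.2.2.2 ▸ e.2.1⟩

lemma goodSet_conj_good {X : Set L} (gs : M.goodSet Δ H X) {s : L}
    (hs : M.goodElem S H s) : M.goodSet Δ H (M.setConj X s) := by
  have hSsub := hobj.1 S hSΔ
  have e_s := M.edge_of_S hobj hSΔ hΔS gs.1 hs.1
  have er_s := M.edge_rev e_s
  refine ⟨M.setConj_mem_Δ hobj hSΔ hΔS gs.1 hs.1, fun h hh => ?_⟩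
  obtain ⟨hd, hcS⟩ := hs.2 h hh
  have e_h := M.edge_H gs hh
  have e_c := M.edge_of_S hobj hSΔ hΔS (gs.2 h hh).2 hcS
  have c1 := M.edge_comp hobj hSΔ hΔS e_h e_c
  have lab2 : M.Pi [h, M.conj s h] = M.Pi [s, h] := M.conj_label hd
  rw [lab2] at c1
  have c2 := M.edge_comp hobj hSΔ hΔS er_s c1.2
  have hsh : [s, h] ∈ M.D := M.mem_append_right [M.inv h] [s, h] hd
  have lab3 : M.Pi [M.inv s, M.Pi [s, h]] = h := M.pi_inv_cancel_left hsh
  rw [lab3] at c2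
  exact ⟨c2.2.2.2.1, c2.2.2.2.2 ▸ c2.2.2.1⟩

lemma goodSet_setIter {X : Set L} (gs : M.goodSet Δ H X) :
    ∀ {u : List L}, (∀ x ∈ u, M.goodElem S H x) → M.goodSet Δ H (M.setIter X u) := by
  intro u
  induction u generalizing X with
  | nil => intro _; exact gs
  | cons s t ih =>
    intro hu
    have hs : M.goodElem S H s := hu s (by simp)
    have : M.goodSet Δ H (M.setConj X s) := M.goodSet_conj_good hobj hSΔ hΔS hH gs hs
    exact ih this (fun x hx => hu x (by simp [hx]))

end HDev

section IterPi

variable {S : Set L}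

lemma setConj_pi_setIter (hSsub : M.IsSubgroup S) :
    ∀ {u : List L} {X : Set L}, X ⊆ S → (∀ x ∈ u, x ∈ S) →
      M.setConj X (M.Pi u) = M.setIter X u := by
  intro u
  induction u with
  | nil =>
    intro X _ _
    show M.setConj X (M.Pi []) = X
    exact M.setConj_one X
  | cons s t ih =>
    intro X hXS hu
    have hs : s ∈ S := hu s (by simp)
    have ht : ∀ x ∈ t, x ∈ S := fun x hx => hu x (by simp [hx])
    have hpt : M.Pi t ∈ S := M.pi_mem_S hSsub ht
    have hsu : (s :: t) ∈ M.D := M.memD_S hSsub (by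
      intro z hz
      simp only [List.mem_cons] at hz
      rcases hz with rfl | hz
      exacts [hs, ht z hz])
    have hstep : M.setConj X (M.Pi (s :: t)) = M.setConj (M.setConj X s) (M.Pi t) := by
      rw [(M.cons_contract hsu).2]
      ext z
      constructor
      · rintro ⟨x, hx, rfl⟩
        exact ⟨M.conj x s, ⟨x, hx, rfl⟩, (M.conj_conj_S hSsub (hXS hx) hs hpt).symm⟩
      · rintro ⟨y, ⟨x, hx, rfl⟩, rfl⟩
        exact ⟨x, hx, (M.conj_conj_S hSsub (hXS hx) hs hpt)⟩
    rw [hstep]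
    show _ = M.setIter (M.setConj X s) t
    exact ih (M.setConj_sub_S hSsub hXS hs) ht

end IterPi

section Chain

variable {Δ : Set (Set L)}

lemma viaChain_head {w : List L} {X : Set L} (h : M.viaChain Δ w X) : X ∈ Δ := by
  cases w with
  | nil => exact h
  | cons a t => exact h.1

lemma chain_pairWord : ∀ (q : List L) (X : Set L),
    M.viaChain Δ (M.pairWord q) X →
      ∀ h ∈ q, M.setConjDef X h ∧ M.setConj X h ∈ Δ := by
  intro q
  induction q with
  | nil => intro X _ h hh; simp at hh
  | cons a t ih =>
    intro X hc h hh
    obtain ⟨hXΔ, hdef, hc2⟩ := hc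
    obtain ⟨hXaΔ, hdef2, hc3⟩ := hc2
    have e : M.edge Δ X (M.setConj X a) a := ⟨hXΔ, hXaΔ, hdef, rfl⟩
    have er := M.edge_rev e
    rw [er.2.2.2] at hc3
    simp only [List.mem_cons] at hh
    rcases hh with rfl | hh
    · exact ⟨hdef, hXaΔ⟩
    · exact ih X hc3 h hh

end Chain

end PartialGroupOn
namespace PartialGroupOn

variable {L : Type u} (M : PartialGroupOn L)

lemma mem_pairWord {H : Set L} (hH : ∀ x ∈ H, M.inv x ∈ H) :
    ∀ {q : List L}, (∀ h ∈ q, h ∈ H) → ∀ x ∈ M.pairWord q, x ∈ H := by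
  intro q
  induction q with
  | nil => intro _ x hx; simp [pairWord] at hx
  | cons a t ih =>
    intro hq x hx
    have ha : a ∈ H := hq a (by simp)
    simp only [pairWord, List.mem_cons] at hx
    rcases hx with rfl | rfl | hx
    · exact ha
    · exact hH a ha
    · exact ih (fun h hh => hq h (by simp [hh])) x hx

section Key

variable {Δ : Set (Set L)} {S H : Set L}
variable (hobj : M.Objective Δ) (hSΔ : S ∈ Δ) (hΔS : ∀ X ∈ Δ, X ⊆ S)
  (hH : M.IsSubgroup H) {P₀ : Set L} (gsP : M.goodSet Δ H P₀)
include hobj hSΔ hΔS hH gsP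

lemma key_setConjDef {u : List L} (hu : ∀ x ∈ u, M.goodElem S H x)
    {k : L} (hk : k ∈ H) : [M.inv k, M.Pi u, k] ∈ M.D := by
  have hSsub := hobj.1 S hSΔ
  have hPS := hΔS P₀ gsP.1
  have huS : ∀ x ∈ u, x ∈ S := fun x hx => (hu x hx).1
  have hz : M.Pi u ∈ S := M.pi_mem_S hSsub huS
  have eP := M.edge_H gsP hk
  have er := M.edge_rev eP
  have gsIter := M.goodSet_setIter hobj hSΔ hΔS hH gsP hu
  refine M.mem_D_of_chain hobj hSΔ hΔS (X := M.setConj P₀ k) ?_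
  refine ⟨eP.2.1, er.2.2.1, ?_⟩
  rw [er.2.2.2]
  refine ⟨gsP.1, M.setConjDef_S hSsub hPS hz, ?_⟩
  rw [M.setConj_pi_setIter hSsub hPS huS]
  exact ⟨gsIter.1, (gsIter.2 k hk).1, (gsIter.2 k hk).2⟩

lemma key_conj_map {k : L} (hk : k ∈ H) :
    ∀ u : List L, (∀ x ∈ u, M.goodElem S H x) →
      M.conj (M.Pi u) k = M.Pi (u.map (fun x => M.conj x k)) := by
  have hSsub := hobj.1 S hSΔ
  have hPS := hΔS P₀ gsP.1
  intro u
  induction u with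
  | nil =>
    intro _
    simp only [List.map_nil]
    rw [pi_nil, M.conj_one_left]
  | cons x t ih =>
    intro hu
    have hx := hu x (by simp)
    have ht : ∀ z ∈ t, M.goodElem S H z := fun z hz => hu z (by simp [hz])
    have htS : ∀ z ∈ t, z ∈ S := fun z hz => (ht z hz).1
    have hxS : x ∈ S := hx.1
    have hpt : M.Pi t ∈ S := M.pi_mem_S hSsub htS
    have Z1gs : M.goodSet Δ H (M.setConj P₀ (M.inv x)) :=
      M.goodSet_conj_good hobj hSΔ hΔS hH gsP (M.goodElem_inv hSsub hx)
    have eZ := M.edge_H Z1gs hk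
    have erZ := M.edge_rev eZ
    have eP1 := M.edge_of_S hobj hSΔ hΔS gsP.1 (M.inv_mem_S hSsub hxS)
    have erP1 := M.edge_rev eP1
    rw [M.inv_inv] at erP1
    have ePk := M.edge_H gsP hk
    have erPk := M.edge_rev ePk
    have gsIter := M.goodSet_setIter hobj hSΔ hΔS hH gsP ht
    have hchain : M.viaChain Δ [M.inv k, x, k, M.inv k, M.Pi t, k]
        (M.setConj (M.setConj P₀ (M.inv x)) k) := by
      refine ⟨eZ.2.1, erZ.2.2.1, ?_⟩
      rw [erZ.2.2.2]
      refine ⟨Z1gs.1, erP1.2.2.1, ?_⟩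
      rw [erP1.2.2.2]
      refine ⟨gsP.1, ePk.2.2.1, ?_⟩
      refine ⟨ePk.2.1, erPk.2.2.1, ?_⟩
      rw [erPk.2.2.2]
      refine ⟨gsP.1, M.setConjDef_S hSsub hPS hpt, ?_⟩
      rw [M.setConj_pi_setIter hSsub hPS htS]
      exact ⟨gsIter.1, (gsIter.2 k hk).1, (gsIter.2 k hk).2⟩
    have hw6 : [M.inv k, x, k, M.inv k, M.Pi t, k] ∈ M.D :=
      M.mem_D_of_chain hobj hSΔ hΔS hchain
    have hw0 : [M.inv k, x, k] ++ [M.inv k, M.Pi t, k] ∈ M.D := hw6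
    have eI : M.Pi [M.inv k, x, k, M.inv k, M.Pi t, k]
        = M.Pi [M.conj x k, M.conj (M.Pi t) k] := by
      simpa [conj] using (M.contract hw0).2
    have hw1 : [M.inv k, x] ++ [k, M.inv k] ++ [M.Pi t, k] ∈ M.D := hw6
    have e2 : M.Pi [M.inv k, x, k, M.inv k, M.Pi t, k]
        = M.Pi [M.inv k, x, M.Pi [k, M.inv k], M.Pi t, k] := by
      simpa using M.Pi_assoc [M.inv k, x] [k, M.inv k] [M.Pi t, k] hw1
    have m2 : [M.inv k, x, M.Pi [k, M.inv k], M.Pi t, k] ∈ M.D := by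
      simpa using M.mem_assoc [M.inv k, x] [k, M.inv k] [M.Pi t, k] hw1
    rw [(M.pair_inv_right k).2] at e2 m2
    have m2' : [M.inv k] ++ [x, M.one] ++ [M.Pi t, k] ∈ M.D := m2
    have e3 : M.Pi [M.inv k, x, M.one, M.Pi t, k]
        = M.Pi [M.inv k, M.Pi [x, M.one], M.Pi t, k] := by
      simpa using M.Pi_assoc [M.inv k] [x, M.one] [M.Pi t, k] m2'
    have m3 : [M.inv k, M.Pi [x, M.one], M.Pi t, k] ∈ M.D := by
      simpa using M.mem_assoc [M.inv k] [x, M.one] [M.Pi t, k] m2'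
    rw [(M.pi_one_right (M.mem_single x)).2] at e3 m3
    have m3' : [M.inv k] ++ [x, M.Pi t] ++ [k] ∈ M.D := m3
    have e4 : M.Pi [M.inv k, x, M.Pi t, k] = M.Pi [M.inv k, M.Pi [x, M.Pi t], k] := by
      simpa using M.Pi_assoc [M.inv k] [x, M.Pi t] [k] m3'
    have hcons : (x :: t) ∈ M.D := M.memD_S hSsub (by
      intro z hz
      simp only [List.mem_cons] at hz
      rcases hz with rfl | hz
      exacts [hxS, htS z hz])
    have e5 : M.Pi (x :: t) = M.Pi [x, M.Pi t] := (M.cons_contract hcons).2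
    have hmapD : (M.conj x k :: t.map (fun z => M.conj z k)) ∈ M.D := M.memD_S hSsub (by
      intro z hz
      simp only [List.mem_cons, List.mem_map] at hz
      rcases hz with rfl | ⟨a, ha, rfl⟩
      · exact (hx.2 k hk).2
      · exact ((ht a ha).2 k hk).2)
    have e6 : M.Pi (M.conj x k :: t.map (fun z => M.conj z k))
        = M.Pi [M.conj x k, M.Pi (t.map (fun z => M.conj z k))] :=
      (M.cons_contract hmapD).2
    simp only [List.map_cons]
    rw [e6, ← ih ht, e5]
    show M.Pi [M.inv k, M.Pi [x, M.Pi t], k] = M.Pi [M.conj x k, M.conj (M.Pi t) k]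
    rw [← e4, ← e3, ← e2, eI]

end Key

end PartialGroupOn
theorem subgroup_le_normalizer_of_object (M : PartialGroupOn L) (p : ℕ)
    (Δ : Set (Set L)) (S : Set L) (hloc : M.IsLocality p Δ S) :
    ∀ H : Set L, M.IsSubgroup H → ∃ P ∈ Δ, H ⊆ M.normalizer P := by
  intro H hH
  obtain ⟨hp, hfin, hSΔ, hΔS, hobj, hSp, hmax⟩ := hloc
  haveI := hfin
  have hSsub : M.IsSubgroup S := hobj.1 S hSΔ
  -- enumerate H and produce a common starting object P₀
  have hHfin : H.Finite := Set.toFinite H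
  have hqH : ∀ h ∈ hHfin.toFinset.toList, h ∈ H := by
    intro h hh
    rw [Finset.mem_toList, Set.Finite.mem_toFinset] at hh
    exact hh
  have hHq : ∀ h ∈ H, h ∈ hHfin.toFinset.toList := by
    intro h hh
    rw [Finset.mem_toList, Set.Finite.mem_toFinset]
    exact hh
  have hpwH : ∀ x ∈ M.pairWord hHfin.toFinset.toList, x ∈ H :=
    M.mem_pairWord hH.1.2.1 hqH
  have hpwD : M.pairWord hHfin.toFinset.toList ∈ M.D := hH.2 _ hpwH
  have hex : M.pairWord hHfin.toFinset.toList ∈ {w | ∃ X, M.viaChain Δ w X} := by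
    rw [← hobj.2.1]
    exact hpwD
  obtain ⟨P₀, hchain⟩ := hex
  have hP₀Δ : P₀ ∈ Δ := M.viaChain_head hchain
  have gsP : M.goodSet Δ H P₀ :=
    ⟨hP₀Δ, fun h hh => M.chain_pairWord _ P₀ hchain h (hHq h hh)⟩
  have hP₀sub : M.IsSubgroup P₀ := hobj.1 P₀ hP₀Δ
  -- the subgroup Q generated by the H-conjugates of P₀
  set Q : Set L :=
    {z | ∃ u : List L, (∀ x ∈ u, ∃ h ∈ H, x ∈ M.setConj P₀ h) ∧ z = M.Pi u}
    with hQdef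
  have hgen : ∀ x : L, (∃ h ∈ H, x ∈ M.setConj P₀ h) → M.goodElem S H x := by
    rintro x ⟨h, hh, hx⟩
    exact M.goodSet_goodElem hΔS (M.goodSet_conj_H hobj hSΔ hΔS hH gsP hh) hx
  have hQS : Q ⊆ S := by
    rintro z ⟨u, hu, rfl⟩
    exact M.pi_mem_S hSsub (fun x hx => (hgen x (hu x hx)).1)
  have key1 : ∀ z ∈ Q, ∀ k ∈ H, [M.inv k, z, k] ∈ M.D := by
    rintro z ⟨u, hu, rfl⟩ k hk
    exact M.key_setConjDef hobj hSΔ hΔS hH gsP (fun x hx => hgen x (hu x hx)) hk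
  have key2 : ∀ z ∈ Q, ∀ k ∈ H, M.conj z k ∈ Q := by
    rintro z ⟨u, hu, rfl⟩ k hk
    rw [M.key_conj_map hobj hSΔ hΔS hH gsP hk u (fun x hx => hgen x (hu x hx))]
    refine ⟨u.map (fun x => M.conj x k), ?_, rfl⟩
    intro y hy
    obtain ⟨x, hxu, rfl⟩ := List.mem_map.1 hy
    obtain ⟨h, hh, hxP⟩ := hu x hxu
    exact ⟨M.Pi [h, k], M.mul_mem_H hH hh hk,
      (M.edge_HH hobj hSΔ hΔS hH gsP hh hk).2.2.2 ▸ ⟨x, hxP, rfl⟩⟩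
  have hQpi : ∀ w : List L, (∀ z ∈ w, z ∈ Q) → M.Pi w ∈ Q := by
    intro w
    induction w with
    | nil => exact fun _ => ⟨[], by simp, rfl⟩
    | cons z0 t ih =>
      intro hw
      obtain ⟨u1, hu1, hz⟩ := hw z0 (by simp)
      obtain ⟨u2, hu2, hpt⟩ := ih (fun a ha => hw a (by simp [ha]))
      refine ⟨u1 ++ u2, ?_, ?_⟩
      · intro a ha
        rcases List.mem_append.1 ha with ha | ha
        exacts [hu1 a ha, hu2 a ha]
      · have hcons : (z0 :: t) ∈ M.D := M.memD_S hSsub (by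
          intro a ha
          exact hQS (hw a ha))
        have h12 : u1 ++ u2 ∈ M.D := M.memD_S hSsub (by
          intro a ha
          rcases List.mem_append.1 ha with ha | ha
          exacts [(hgen a (hu1 a ha)).1, (hgen a (hu2 a ha)).1])
        rw [(M.cons_contract hcons).2, (M.contract h12).2, hz, hpt]
  have hQsub : M.IsSubgroup Q := by
    refine ⟨⟨⟨M.one, [], by simp, rfl⟩, ?_, ?_⟩, ?_⟩
    · rintro z ⟨u, hu, rfl⟩
      have huS : ∀ x ∈ u, x ∈ S := fun x hx => (hgen x (hu x hx)).1
      refine ⟨M.wordInv u, ?_, M.inv_pi (M.memD_S hSsub huS)⟩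
      intro y hy
      simp only [wordInv, List.mem_map, List.mem_reverse] at hy
      obtain ⟨x, hxu, rfl⟩ := hy
      obtain ⟨h, hh, hxP⟩ := hu x hxu
      obtain ⟨a, ha, rfl⟩ := hxP
      exact ⟨h, hh, M.inv a, hP₀sub.1.2.1 a ha,
        (M.inv_conj ((gsP.2 h hh).1 a ha)).symm ▸ rfl⟩
    · exact fun w hw _ => hQpi w hw
    · exact fun w hw => M.memD_S hSsub (fun x hx => hQS (hw x hx))
  have hP₀Q : P₀ ⊆ Q := by
    intro x hx
    exact ⟨[x], by
      intro y hy
      simp only [List.mem_cons, List.not_mem_nil, or_false] at hy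
      subst hy
      exact ⟨M.one, M.one_mem_H hH, by rw [M.setConj_one]; exact hx⟩,
      (M.Pi_single x).symm⟩
  have hQΔ : Q ∈ Δ := M.mem_Δ_of_between hobj hSΔ hΔS hP₀Δ hQsub hP₀Q hQS
  refine ⟨Q, hQΔ, ?_⟩
  intro h hh
  refine ⟨fun z hz => key1 z hz h hh, ?_⟩
  ext z
  constructor
  · rintro ⟨y, hy, rfl⟩
    exact key2 y hy h hh
  · intro hz
    refine ⟨M.conj z (M.inv h), key2 z hz (M.inv h) (M.inv_mem_H hH hh), ?_⟩
    have hd : [M.inv (M.inv h), z, M.inv h] ∈ M.D :=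
      key1 z hz (M.inv h) (M.inv_mem_H hH hh)
    have := (M.conj_rev hd).2
    rw [M.inv_inv] at this
    exact this.symm
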